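/- arXiv:2307.01959 — 3 statements merged into one kernel-verified Lean document; each statement's English description precedes it below -/
import Mathlib

section
/- Let A be a nonzero bounded operator on a Hilbert space with closed range. Then γ(A)² = γ(A*A) = γ(AA*) = γ(A*)², where γ denotes the reduced minimum modulus. -/
open ContinuousLinearMap
open scoped ENNReal

noncomputable section

variable {H : Type*} [NormedAddCommGroup H] [InnerProductSpace ℂ H] [CompleteSpace H]

/-- Reduced minimum modulus `γ(A) = inf {‖A f‖ : f ∈ N(A)ᗮ, ‖f‖ = 1}`. -/
def gamma (A : H →L[ℂ] H) : ℝ :=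
  sInf {c : ℝ | ∃ f ∈ (LinearMap.ker (A : H →ₗ[ℂ] H))ᗮ, ‖f‖ = 1 ∧ c = ‖A f‖}

/-- `B` is the Moore–Penrose inverse of `A`. -/
def IsMoorePenrose (A B : H →L[ℂ] H) : Prop :=
  A ∘L B ∘L A = A ∧ B ∘L A ∘L B = B ∧ IsSelfAdjoint (A ∘L B) ∧ IsSelfAdjoint (B ∘L A)

/-- `P` is an orthogonal projection. -/
def IsOrthoProj (P : H →L[ℂ] H) : Prop := P ∘L P = P ∧ IsSelfAdjoint P

/-- `P` is the orthogonal projection onto the subspace `S`. -/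
def IsOrthoProjOnto (P : H →L[ℂ] H) (S : Submodule ℂ H) : Prop :=
  IsOrthoProj P ∧ LinearMap.range (P : H →ₗ[ℂ] H) = S

/-- `V` is a partial isometry. -/
def IsPartialIsom (V : H →L[ℂ] H) : Prop := V ∘L adjoint V ∘L V = V

/-- `A = V C` is the polar decomposition of `A`: `C = |A|` and `V = V_A` is the
partial isometry with `N(V) = N(A)`. -/
def IsPolarDecomp (A V C : H →L[ℂ] H) : Prop :=
  A = V ∘L C ∧ C.IsPositive ∧ C ∘L C = adjoint A ∘L A ∧ IsPartialIsom V ∧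
    LinearMap.ker (V : H →ₗ[ℂ] H) = LinearMap.ker (A : H →ₗ[ℂ] H)

/-- `J` is a two-sided ideal of `B(H)`. -/
structure IsTwoSidedIdeal (J : Set (H →L[ℂ] H)) : Prop where
  zero_mem : (0 : H →L[ℂ] H) ∈ J
  add_mem : ∀ {A B : H →L[ℂ] H}, A ∈ J → B ∈ J → A + B ∈ J
  neg_mem : ∀ {A : H →L[ℂ] H}, A ∈ J → -A ∈ J
  mul_left : ∀ (B : H →L[ℂ] H) {A : H →L[ℂ] H}, A ∈ J → B ∘L A ∈ J
  mul_right : ∀ (B : H →L[ℂ] H) {A : H →L[ℂ] H}, A ∈ J → A ∘L B ∈ J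

/-- `J` is a proper two-sided ideal of `B(H)`. -/
def IsProperIdeal (J : Set (H →L[ℂ] H)) : Prop :=
  IsTwoSidedIdeal J ∧ J ≠ {0} ∧ J ≠ Set.univ

/-- The `n`-th approximation number of `A`; for a compact operator this is the
`(n+1)`-th singular value `s_{n+1}(A)`. -/
def approxNum (A : H →L[ℂ] H) (n : ℕ) : ℝ :=
  sInf {c : ℝ | ∃ F : H →L[ℂ] H, FiniteDimensional ℂ ↥(LinearMap.range (F : H →ₗ[ℂ] H)) ∧
    Module.finrank ℂ ↥(LinearMap.range (F : H →ₗ[ℂ] H)) ≤ n ∧ c = ‖A - F‖}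

/-- Submajorization `s(B) ≺_w s(A)` of the singular value sequences. -/
def Submaj (B A : H →L[ℂ] H) : Prop :=
  ∀ n : ℕ, ∑ i ∈ Finset.range n, approxNum B i ≤ ∑ i ∈ Finset.range n, approxNum A i

/-- `J` is arithmetic mean closed. -/
def IsArithMeanClosed (J : Set (H →L[ℂ] H)) : Prop :=
  ∀ A B : H →L[ℂ] H, A ∈ J → IsCompactOperator (⇑B) → Submaj B A → B ∈ J

/-- Symmetric norming function on the space of finitely supported real sequences. -/
structure IsSymmNormingFun (Φ : (ℕ →₀ ℝ) → ℝ) : Prop where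
  triangle : ∀ x y, Φ (x + y) ≤ Φ x + Φ y
  homog : ∀ (c : ℝ) (x), Φ (c • x) = |c| * Φ x
  definite : ∀ x, Φ x = 0 → x = 0
  normalized : Φ (Finsupp.single 0 1) = 1
  symm : ∀ (σ : Equiv.Perm ℕ) (x), Φ (Finsupp.equivMapDomain σ x) = Φ x
  abs_invariant : ∀ x, Φ (Finsupp.mapRange (fun t => |t|) abs_zero x) = Φ x

/-- The (possibly infinite) norm `‖A‖_Φ = sup_k Φ(s_1(A),…,s_k(A),0,…)`. -/
def phiNorm (Φ : (ℕ →₀ ℝ) → ℝ) (A : H →L[ℂ] H) : ℝ≥0∞ :=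
  ⨆ k : ℕ, ENNReal.ofReal (Φ (∑ i ∈ Finset.range k, Finsupp.single i (approxNum A i)))

/-- `(P, Q)` is a Fredholm pair of projections: `Q P|_{R(P)} : R(P) → R(Q)` has
finite-dimensional kernel `R(P) ∩ N(Q)`, finite-dimensional cokernel
(measured by `R(Q) ∩ N(P)`) and closed range. -/
def IsFredholmPair (P Q : H →L[ℂ] H) : Prop :=
  FiniteDimensional ℂ ↥(LinearMap.range (P : H →ₗ[ℂ] H) ⊓ LinearMap.ker (Q : H →ₗ[ℂ] H)) ∧
  FiniteDimensional ℂ ↥(LinearMap.range (Q : H →ₗ[ℂ] H) ⊓ LinearMap.ker (P : H →ₗ[ℂ] H)) ∧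
  IsClosed (Q '' (LinearMap.range (P : H →ₗ[ℂ] H) : Set H))

/-- Essential codimension `[P : Q] = dim(N(Q) ∩ R(P)) − dim(R(Q) ∩ N(P))`. -/
def essCodim (P Q : H →L[ℂ] H) : ℤ :=
  (Module.finrank ℂ ↥(LinearMap.range (P : H →ₗ[ℂ] H) ⊓ LinearMap.ker (Q : H →ₗ[ℂ] H)) : ℤ) -
    (Module.finrank ℂ ↥(LinearMap.range (Q : H →ₗ[ℂ] H) ⊓ LinearMap.ker (P : H →ₗ[ℂ] H)) : ℤ)

/-- `{f n}` is a frame for the closed subspace `S`. -/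
def IsFrameFor (f : ℕ → H) (S : Submodule ℂ H) : Prop :=
  IsClosed (S : Set H) ∧ (∀ n, f n ∈ S) ∧
  ∃ α β : ℝ, 0 < α ∧ α ≤ β ∧ ∀ v ∈ S,
    α * ‖v‖ ^ 2 ≤ ∑' n, ‖(inner ℂ v (f n) : ℂ)‖ ^ 2 ∧
    ∑' n, ‖(inner ℂ v (f n) : ℂ)‖ ^ 2 ≤ β * ‖v‖ ^ 2

/-- The nonzero point spectrum of `CA`, as an index type. -/
def specIdx (CA : H →L[ℂ] H) : Type _ :=
  {lam : ℝ // lam ≠ 0 ∧ LinearMap.ker ((CA - (lam : ℂ) • (1 : H →L[ℂ] H) : H →L[ℂ] H) : H →ₗ[ℂ] H) ≠ ⊥}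

open scoped InnerProductSpace

set_option maxHeartbeats 1000000

lemma gamma_eq_inv_norm (A B : H →L[ℂ] H) (hB : B ≠ 0)
    (h1 : ∀ f ∈ (LinearMap.ker (A : H →ₗ[ℂ] H))ᗮ, B (A f) = f)
    (h2 : ∀ g, B g ∈ (LinearMap.ker (A : H →ₗ[ℂ] H))ᗮ)
    (h3 : ∀ g, ‖A (B g)‖ ≤ ‖g‖) :
    gamma A = ‖B‖⁻¹ := by
  have hBpos : (0:ℝ) < ‖B‖ := norm_pos_iff.mpr hB
  set S : Set ℝ := {c : ℝ | ∃ f ∈ (LinearMap.ker (A : H →ₗ[ℂ] H))ᗮ, ‖f‖ = 1 ∧ c = ‖A f‖} with hS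
  have hg : gamma A = sInf S := rfl
  have hlb : ∀ c ∈ S, ‖B‖⁻¹ ≤ c := by
    rintro c ⟨f, hfK, hf1, rfl⟩
    have hle : ‖B (A f)‖ ≤ ‖B‖ * ‖A f‖ := B.le_opNorm _
    rw [h1 f hfK, hf1] at hle
    rw [inv_le_iff_one_le_mul₀ hBpos]
    linarith
  have hbdd : BddBelow S := ⟨_, hlb⟩
  have hmem : ∀ x : H, B x ≠ 0 →
      (‖A ((‖B x‖⁻¹ : ℂ) • B x)‖ ∈ S ∧ sInf S ≤ ‖x‖ / ‖B x‖) := by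
    intro x hx
    have hBx : (0:ℝ) < ‖B x‖ := norm_pos_iff.mpr hx
    have hfK : (‖B x‖⁻¹ : ℂ) • B x ∈ (LinearMap.ker (A : H →ₗ[ℂ] H))ᗮ :=
      Submodule.smul_mem _ _ (h2 x)
    have hf1 : ‖(‖B x‖⁻¹ : ℂ) • B x‖ = 1 := by
      rw [norm_smul, norm_inv, Complex.norm_real, Real.norm_eq_abs, abs_of_pos hBx,
        inv_mul_cancel₀ hBx.ne']
    have hmem' : ‖A ((‖B x‖⁻¹ : ℂ) • B x)‖ ∈ S := ⟨_, hfK, hf1, rfl⟩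
    refine ⟨hmem', (csInf_le hbdd hmem').trans ?_⟩
    have heq : ‖A ((‖B x‖⁻¹ : ℂ) • B x)‖ = ‖A (B x)‖ / ‖B x‖ := by
      rw [map_smul, norm_smul, norm_inv, Complex.norm_real, Real.norm_eq_abs,
        abs_of_pos hBx, inv_mul_eq_div]
    rw [heq]
    gcongr
    exact h3 x
  have le1 : ‖B‖⁻¹ ≤ sInf S := by
    obtain ⟨x, hx⟩ : ∃ x, B x ≠ 0 := by
      by_contra h
      push_neg at h
      exact hB (ContinuousLinearMap.ext fun x => by simp [h x])
    exact le_csInf ⟨_, (hmem x hx).1⟩ hlb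
  have le2 : sInf S ≤ ‖B‖⁻¹ := by
    by_contra h
    push_neg at h
    have hSpos : (0:ℝ) < sInf S := lt_trans (inv_pos.mpr hBpos) h
    have h0 : (sInf S)⁻¹ < ‖B‖ := by
      have := inv_strictAnti₀ (inv_pos.mpr hBpos) h
      rwa [inv_inv] at this
    set c : ℝ := ((sInf S)⁻¹ + ‖B‖) / 2 with hc
    have hc1 : (sInf S)⁻¹ < c := by rw [hc]; linarith
    have hc2 : c < ‖B‖ := by rw [hc]; linarith
    have hc0 : (0:ℝ) < c := lt_trans (inv_pos.mpr hSpos) hc1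
    obtain ⟨x, hx1, hx2⟩ := B.exists_lt_apply_of_lt_opNorm hc2
    have hBx : (0:ℝ) < ‖B x‖ := lt_trans hc0 hx2
    have hx0 : B x ≠ 0 := fun h' => by simp [h'] at hBx
    have hstep := (hmem x hx0).2
    -- sInf S ≤ ‖x‖ / ‖B x‖, ‖x‖ < 1, c < ‖B x‖, (sInf S)⁻¹ < c
    have e1 : sInf S * ‖B x‖ ≤ ‖x‖ := by
      rwa [← le_div_iff₀ hBx]
    have e2 : (1:ℝ) < sInf S * c := by
      have := inv_strictAnti₀ (inv_pos.mpr hSpos) hc1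
      rw [inv_inv] at this
      -- c⁻¹ < sInf S
      calc (1:ℝ) = c⁻¹ * c := by field_simp
      _ < sInf S * c := by gcongr
    nlinarith [mul_lt_mul_of_pos_left hx2 hSpos]
  linarith

lemma mem_orth_ker_adjoint_apply (A : H →L[ℂ] H) (y : H) :
    adjoint A y ∈ (LinearMap.ker (A : H →ₗ[ℂ] H))ᗮ := by
  intro u hu
  rw [ContinuousLinearMap.adjoint_inner_right]
  rw [LinearMap.mem_ker] at hu
  simp [show A u = 0 from hu]

lemma ker_adjoint_comp_self (A : H →L[ℂ] H) :
    LinearMap.ker ((adjoint A ∘L A : H →L[ℂ] H) : H →ₗ[ℂ] H) = LinearMap.ker (A : H →ₗ[ℂ] H) := by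
  ext x
  simp only [LinearMap.mem_ker, ContinuousLinearMap.coe_coe, ContinuousLinearMap.coe_comp', Function.comp_apply]
  constructor
  · intro h
    have : (⟪A x, A x⟫_ℂ) = 0 := by
      rw [← ContinuousLinearMap.adjoint_inner_right, h, inner_zero_right]
    rwa [inner_self_eq_zero] at this
  · intro h; rw [h, map_zero]

lemma ker_adjoint_eq (A : H →L[ℂ] H) :
    LinearMap.ker ((adjoint A : H →L[ℂ] H) : H →ₗ[ℂ] H) = (LinearMap.range (A : H →ₗ[ℂ] H))ᗮ := by
  ext y
  simp only [LinearMap.mem_ker, ContinuousLinearMap.coe_coe, Submodule.mem_orthogonal]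
  constructor
  · rintro h u ⟨x, rfl⟩
    rw [ContinuousLinearMap.coe_coe, ← ContinuousLinearMap.adjoint_inner_right, h, inner_zero_right]
  · intro h
    rw [← inner_self_eq_zero (𝕜 := ℂ), ContinuousLinearMap.adjoint_inner_right]
    exact h _ (LinearMap.mem_range_self _ _)

lemma exists_pinv (A : H →L[ℂ] H)
    (hcl : IsClosed (LinearMap.range (A : H →ₗ[ℂ] H) : Set H)) :
    ∃ B : H →L[ℂ] H,
      (∀ g, B g ∈ (LinearMap.ker (A : H →ₗ[ℂ] H))ᗮ) ∧
      (∀ f ∈ (LinearMap.ker (A : H →ₗ[ℂ] H))ᗮ, B (A f) = f) ∧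
      (∀ g ∈ LinearMap.range (A : H →ₗ[ℂ] H), A (B g) = g) ∧
      IsSelfAdjoint (A ∘L B) ∧
      IsSelfAdjoint (B ∘L A) ∧
      (∀ g, ‖A (B g)‖ ≤ ‖g‖) ∧
      (∀ g, ‖B (A g)‖ ≤ ‖g‖) := by
  set N := LinearMap.ker (A : H →ₗ[ℂ] H) with hN
  set K := Nᗮ with hK
  set R := LinearMap.range (A : H →ₗ[ℂ] H) with hR
  haveI : CompleteSpace R := hcl.completeSpace_coe
  haveI : CompleteSpace K := N.isClosed_orthogonal.completeSpace_coe
  haveI : CompleteSpace N := (ContinuousLinearMap.isClosed_ker A).completeSpace_coe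
  -- the reduced operator
  set Ahat : K →L[ℂ] R :=
    ContinuousLinearMap.codRestrict (A.comp K.subtypeL) R
      (fun x => LinearMap.mem_range_self _ _) with hAhat
  have hAhat_apply : ∀ f : K, (Ahat f : H) = A f := fun f => rfl
  have hinj : LinearMap.ker (Ahat : K →ₗ[ℂ] R) = ⊥ := by
    rw [Submodule.eq_bot_iff]
    rintro ⟨f, hfK⟩ hf
    have hf' : A f = 0 := by
      have := congrArg (Subtype.val) hf
      simpa [hAhat_apply] using this
    have hfN : f ∈ N := hf'
    have : (⟪f, f⟫_ℂ) = 0 := hfK f hfN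
    rw [inner_self_eq_zero] at this
    exact Subtype.ext this
  have hsurj : LinearMap.range (Ahat : K →ₗ[ℂ] R) = ⊤ := by
    rw [Submodule.eq_top_iff']
    rintro ⟨g, x, rfl⟩
    refine ⟨K.orthogonalProjectionOnto x, ?_⟩
    apply Subtype.ext
    show A (K.orthogonalProjectionOnto x : H) = A x
    have hmem : x - K.orthogonalProjectionOnto x ∈ Kᗮ :=
      Submodule.sub_starProjection_mem_orthogonal (K := K) x
    have hKN : Kᗮ = N := by rw [hK]; exact Submodule.orthogonal_orthogonal N
    rw [hKN] at hmem
    have h0 : A (x - K.orthogonalProjectionOnto x) = 0 := hmem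
    rw [map_sub, sub_eq_zero] at h0
    exact h0.symm
  set e := ContinuousLinearEquiv.ofBijective Ahat hinj hsurj with he
  set B : H →L[ℂ] H :=
    K.subtypeL ∘L (e.symm : R →L[ℂ] K) ∘L
      ((R.orthogonalProjectionOnto) : H →L[ℂ] R) with hB
  have hB_apply : ∀ g, B g = ((e.symm (R.orthogonalProjectionOnto g) : K) : H) := fun g => rfl
  have hBmem : ∀ g, B g ∈ K := fun g => (e.symm (R.orthogonalProjectionOnto g)).2
  have he_apply : ∀ f : K, e f = Ahat f := fun f =>
    congrFun (ContinuousLinearEquiv.coeFn_ofBijective Ahat hinj hsurj) f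
  -- B (A f) = f for f ∈ K
  have hBA : ∀ f ∈ K, B (A f) = f := by
    intro f hf
    rw [hB_apply]
    have h1 : R.orthogonalProjectionOnto (A f) = ⟨A f, LinearMap.mem_range_self _ _⟩ :=
      Submodule.orthogonalProjectionOnto_mem_subspace_eq_self (⟨A f, LinearMap.mem_range_self _ _⟩ : R)
    rw [h1]
    have h2 : (⟨A f, LinearMap.mem_range_self _ _⟩ : R) = e ⟨f, hf⟩ := by
      rw [he_apply]; exact Subtype.ext rfl
    rw [h2, ContinuousLinearEquiv.symm_apply_apply]
  -- A (B g) = proj_R g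
  have hAB : ∀ g, A (B g) = (R.orthogonalProjectionOnto g : H) := by
    intro g
    rw [hB_apply]
    have : A ((e.symm (R.orthogonalProjectionOnto g) : K) : H)
        = (Ahat (e.symm (R.orthogonalProjectionOnto g)) : H) := rfl
    rw [this, ← he_apply, ContinuousLinearEquiv.apply_symm_apply]
  -- B (A x) = proj_K x for all x
  have hBA' : ∀ x, B (A x) = (K.orthogonalProjectionOnto x : H) := by
    intro x
    have hd : A x = A (K.orthogonalProjectionOnto x) := by
      have hmem : x - K.orthogonalProjectionOnto x ∈ Kᗮ :=
        Submodule.sub_starProjection_mem_orthogonal (K := K) x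
      have hKN : Kᗮ = N := by rw [hK]; exact Submodule.orthogonal_orthogonal N
      rw [hKN] at hmem
      have h0 : A (x - K.orthogonalProjectionOnto x) = 0 := hmem
      rw [map_sub, sub_eq_zero] at h0
      exact h0
    rw [hd, hBA _ (K.orthogonalProjectionOnto x).2]
  refine ⟨B, hBmem, hBA, ?_, ?_, ?_, ?_, ?_⟩
  · intro g hg
    rw [hAB]
    exact (Submodule.starProjection_eq_self_iff (K := R)).mpr hg
  · have : A ∘L B = R.subtypeL ∘L (R.orthogonalProjectionOnto : H →L[ℂ] R) := by
      ext g; exact hAB g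
    rw [this]
    exact isSelfAdjoint_starProjection R
  · have : B ∘L A = K.subtypeL ∘L (K.orthogonalProjectionOnto : H →L[ℂ] K) := by
      ext g; exact hBA' g
    rw [this]
    exact isSelfAdjoint_starProjection K
  · intro g
    rw [hAB]
    calc ‖(R.orthogonalProjectionOnto g : H)‖ ≤ ‖R.orthogonalProjectionOnto‖ * ‖g‖ :=
          (R.orthogonalProjectionOnto).le_opNorm g
    _ ≤ 1 * ‖g‖ := by gcongr; exact Submodule.orthogonalProjectionOnto_norm_le R
    _ = ‖g‖ := one_mul _
  · intro g
    rw [hBA']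
    calc ‖(K.orthogonalProjectionOnto g : H)‖ ≤ ‖K.orthogonalProjectionOnto‖ * ‖g‖ :=
          (K.orthogonalProjectionOnto).le_opNorm g
    _ ≤ 1 * ‖g‖ := by gcongr; exact Submodule.orthogonalProjectionOnto_norm_le K
    _ = ‖g‖ := one_mul _

/-- For a nonzero closed range operator `A`,
`γ(A)² = γ(A*A) = γ(AA*) = γ(A*)²`. -/
theorem stmt_1 (A : H →L[ℂ] H) (hA : A ≠ 0)
    (hcl : IsClosed (LinearMap.range (A : H →ₗ[ℂ] H) : Set H)) :
    gamma A ^ 2 = gamma (adjoint A ∘L A) ∧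
    gamma (adjoint A ∘L A) = gamma (A ∘L adjoint A) ∧
    gamma (A ∘L adjoint A) = gamma (adjoint A) ^ 2 := by
  obtain ⟨B, hBmem, hBA, hAB, hsaAB, hsaBA, hnAB, hnBA⟩ := exists_pinv A hcl
  haveI : CompleteSpace (LinearMap.range (A : H →ₗ[ℂ] H)) := hcl.completeSpace_coe
  obtain ⟨x, hx⟩ : ∃ x, A x ≠ 0 := by
    by_contra h
    push_neg at h
    exact hA (ContinuousLinearMap.ext fun x => by simp [h x])
  have hB0 : B ≠ 0 := by
    intro h
    have h2 := hAB (A x) (LinearMap.mem_range_self _ _)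
    rw [h] at h2
    simp only [ContinuousLinearMap.zero_apply, map_zero] at h2
    exact hx h2.symm
  have hnormB' : ‖adjoint B‖ = ‖B‖ :=
    LinearIsometryEquiv.norm_map ContinuousLinearMap.adjoint B
  have hB'0 : adjoint B ≠ 0 := fun h =>
    hB0 (by rw [← adjoint_adjoint B, h, map_zero])
  -- operator identities
  have hBAB_op : B ∘L (A ∘L B) = B := by
    ext g
    exact hBA (B g) (hBmem g)
  have hABadj : adjoint (A ∘L B) = A ∘L B := hsaAB.adjoint_eq
  have hBAadj : adjoint (B ∘L A) = B ∘L A := hsaBA.adjoint_eq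
  have hB'A' : ∀ f, adjoint B (adjoint A f) = A (B f) := by
    intro f
    have : adjoint B ∘L adjoint A = A ∘L B := by
      rw [← ContinuousLinearMap.adjoint_comp, hABadj]
    calc adjoint B (adjoint A f) = (adjoint B ∘L adjoint A) f := rfl
    _ = (A ∘L B) f := by rw [this]
    _ = A (B f) := rfl
  have hA'B' : ∀ f, adjoint A (adjoint B f) = B (A f) := by
    intro f
    have : adjoint A ∘L adjoint B = B ∘L A := by
      rw [← ContinuousLinearMap.adjoint_comp, hBAadj]
    calc adjoint A (adjoint B f) = (adjoint A ∘L adjoint B) f := rfl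
    _ = (B ∘L A) f := by rw [this]
    _ = B (A f) := rfl
  have hB'mem : ∀ g, adjoint B g ∈ LinearMap.range (A : H →ₗ[ℂ] H) := by
    intro g
    have h5 : (A ∘L B) ∘L adjoint B = adjoint B := by
      rw [← hABadj, ← ContinuousLinearMap.adjoint_comp, hBAB_op]
    have h6 : A (B (adjoint B g)) = adjoint B g := by
      calc A (B (adjoint B g)) = ((A ∘L B) ∘L adjoint B) g := rfl
      _ = adjoint B g := by rw [h5]
    exact ⟨B (adjoint B g), h6⟩
  have hABg : ∀ g, A (B (adjoint B g)) = adjoint B g := fun g =>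
    hAB _ (hB'mem g)
  have hKadj : (LinearMap.ker ((adjoint A : H →L[ℂ] H) : H →ₗ[ℂ] H))ᗮ = LinearMap.range (A : H →ₗ[ℂ] H) := by
    rw [ker_adjoint_eq, Submodule.orthogonal_orthogonal]
  -- gamma A
  have gA : gamma A = ‖B‖⁻¹ := gamma_eq_inv_norm A B hB0 hBA hBmem hnAB
  -- gamma A*
  have gA' : gamma (adjoint A) = ‖B‖⁻¹ := by
    rw [← hnormB']
    apply gamma_eq_inv_norm (adjoint A) (adjoint B) hB'0
    · intro f hf
      rw [hKadj] at hf
      rw [hB'A']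
      exact hAB f hf
    · intro g
      rw [hKadj]
      exact hB'mem g
    · intro g
      rw [hA'B']
      exact hnBA g
  -- gamma (A* A)
  have gAA : gamma (adjoint A ∘L A) = (‖B‖ * ‖B‖)⁻¹ := by
    have hD : ‖B ∘L adjoint B‖ = ‖B‖ * ‖B‖ := by
      have := ContinuousLinearMap.norm_adjoint_comp_self (adjoint B)
      rwa [adjoint_adjoint, hnormB'] at this
    have hD0 : B ∘L adjoint B ≠ 0 := by
      intro h
      rw [h, norm_zero] at hD
      have : (0:ℝ) < ‖B‖ := norm_pos_iff.mpr hB0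
      nlinarith
    rw [← hD]
    apply gamma_eq_inv_norm (adjoint A ∘L A) (B ∘L adjoint B) hD0
    · intro f hf
      rw [_root_.ker_adjoint_comp_self] at hf
      show B (adjoint B ((adjoint A ∘L A) f)) = f
      have h7 : (adjoint A ∘L A) f = adjoint A (A f) := rfl
      rw [h7, hB'A', hBA (B (A f)) (hBmem (A f)), hBA f hf]
    · intro g
      rw [_root_.ker_adjoint_comp_self]
      exact hBmem _
    · intro g
      show ‖(adjoint A ∘L A) (B (adjoint B g))‖ ≤ ‖g‖
      have h8 : (adjoint A ∘L A) (B (adjoint B g)) = adjoint A (A (B (adjoint B g))) := rfl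
      rw [h8, hABg, hA'B']
      exact hnBA g
  -- gamma (A A*)
  have gAA' : gamma (A ∘L adjoint A) = (‖B‖ * ‖B‖)⁻¹ := by
    have hD : ‖adjoint B ∘L B‖ = ‖B‖ * ‖B‖ :=
      ContinuousLinearMap.norm_adjoint_comp_self B
    have hD0 : adjoint B ∘L B ≠ 0 := by
      intro h
      rw [h, norm_zero] at hD
      have : (0:ℝ) < ‖B‖ := norm_pos_iff.mpr hB0
      nlinarith
    have hker : LinearMap.ker ((A ∘L adjoint A : H →L[ℂ] H) : H →ₗ[ℂ] H) = LinearMap.ker ((adjoint A : H →L[ℂ] H) : H →ₗ[ℂ] H) := by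
      have := _root_.ker_adjoint_comp_self (adjoint A)
      rwa [adjoint_adjoint] at this
    rw [← hD]
    apply gamma_eq_inv_norm (A ∘L adjoint A) (adjoint B ∘L B) hD0
    · intro f hf
      rw [hker, hKadj] at hf
      show adjoint B (B ((A ∘L adjoint A) f)) = f
      have h9 : (A ∘L adjoint A) f = A (adjoint A f) := rfl
      rw [h9, hBA (adjoint A f) (mem_orth_ker_adjoint_apply A f), hB'A']
      exact hAB f hf
    · intro g
      rw [hker, hKadj]
      exact hB'mem _
    · intro g
      show ‖(A ∘L adjoint A) (adjoint B (B g))‖ ≤ ‖g‖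
      have h10 : (A ∘L adjoint A) (adjoint B (B g)) = A (adjoint A (adjoint B (B g))) := rfl
      rw [h10, hA'B', hBA (B g) (hBmem g)]
      exact hnAB g
  refine ⟨?_, ?_, ?_⟩
  · rw [gA, gAA, sq, mul_inv]
  · rw [gAA, gAA']
  · rw [gAA', gA', sq, mul_inv]

end
end

section
/- Let J be a two-sided ideal of the algebra of bounded operators on a Hilbert space H, and let A, B be closed range operators with A − B ∈ J. Then A^† − B^† ∈ J, P_{R(A)} − P_{R(B)} ∈ J, and P_{N(A)} − P_{N(B)} ∈ J. -/
open ContinuousLinearMap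
open scoped ENNReal

noncomputable section

variable {H : Type*} [NormedAddCommGroup H] [InnerProductSpace ℂ H] [CompleteSpace H]

set_option maxHeartbeats 2000000
set_option synthInstance.maxHeartbeats 1000000

/-- Factorization: if `‖C x‖ = ‖T x‖` for all `x`, then `C = W ∘ T` for a bounded `W`
vanishing on `(range T)ᗮ`. -/
private lemma exists_factor_through (T C : H →L[ℂ] H) (hnorm : ∀ x, ‖C x‖ = ‖T x‖) :
    ∃ W : H →L[ℂ] H, (∀ x, W (T x) = C x) ∧ ∀ y ∈ (LinearMap.range (T : H →ₗ[ℂ] H))ᗮ, W y = 0 := by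
  classical
  set T' : H →ₗ[ℂ] H := (T : H →ₗ[ℂ] H) with hT'
  have hrr : LinearMap.range T' = LinearMap.range (T : H →ₗ[ℂ] H) := by
    ext x; simp [hT', LinearMap.mem_range]
  have hker : LinearMap.ker T' ≤ LinearMap.ker (C : H →ₗ[ℂ] H) := by
    intro x hx
    have hx' : T x = 0 := hx
    have h0 : ‖C x‖ = 0 := by rw [hnorm, hx', norm_zero]
    exact LinearMap.mem_ker.mpr (by simpa using norm_eq_zero.mp h0)
  set ψ : ↥(LinearMap.range T') →ₗ[ℂ] H :=
    ((LinearMap.ker T').liftQ (C : H →ₗ[ℂ] H) hker).comp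
      (T'.quotKerEquivRange.symm : ↥(LinearMap.range T') →ₗ[ℂ] H ⧸ LinearMap.ker T') with hψ
  have hψ_app : ∀ (x : H) (h : T' x ∈ LinearMap.range T'), ψ ⟨T' x, h⟩ = C x := by
    intro x h
    have h1 : T'.quotKerEquivRange.symm ⟨T' x, h⟩
        = (LinearMap.ker T').mkQ x := T'.quotKerEquivRange_symm_apply_image x h
    simp only [hψ, LinearMap.comp_apply, LinearEquiv.coe_coe, h1]
    simp [Submodule.mkQ_apply, Submodule.liftQ_apply]
  have hψ_norm : ∀ u : ↥(LinearMap.range T'), ‖ψ u‖ = ‖u‖ := by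
    rintro ⟨u, hu⟩
    obtain ⟨x, rfl⟩ := LinearMap.mem_range.mp hu
    rw [hψ_app x]
    calc ‖C x‖ = ‖T x‖ := hnorm x
    _ = ‖(⟨T' x, LinearMap.mem_range_self T' x⟩ : ↥(LinearMap.range T'))‖ := rfl
  set Ψ : ↥(LinearMap.range T') →ₗᵢ[ℂ] H := ⟨ψ, hψ_norm⟩ with hΨ
  set S : Submodule ℂ H := (LinearMap.range T').topologicalClosure with hS
  haveI : CompleteSpace ↥S := (Submodule.isClosed_topologicalClosure _).completeSpace_coe
  set e₂ : ↥(LinearMap.range T') →ₗᵢ[ℂ] ↥S :=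
    ⟨Submodule.inclusion (Submodule.le_topologicalClosure _), fun _ => rfl⟩ with he₂
  have h_ui : IsUniformInducing e₂.toContinuousLinearMap := e₂.isometry.isUniformInducing
  have h_dense : DenseRange ⇑e₂.toContinuousLinearMap := by
    intro x
    rw [closure_subtype]
    have himg : (Subtype.val '' Set.range ⇑e₂.toContinuousLinearMap)
        = (LinearMap.range T' : Set H) := by
      ext y
      constructor
      · rintro ⟨z, ⟨u, rfl⟩, rfl⟩
        exact u.2
      · intro hy
        exact ⟨e₂ ⟨y, hy⟩, ⟨⟨y, hy⟩, rfl⟩, rfl⟩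
    rw [himg, ← Submodule.topologicalClosure_coe]
    exact x.2
  set W₁ : ↥S →L[ℂ] H :=
    ContinuousLinearMap.extend Ψ.toContinuousLinearMap e₂.toContinuousLinearMap
    with hW₁
  set W : H →L[ℂ] H := W₁.comp (S.orthogonalProjectionOnto : H →L[ℂ] ↥S) with hW
  have hWmem : ∀ (u : H) (hu : u ∈ LinearMap.range T'), W u = ψ ⟨u, hu⟩ := by
    intro u hu
    have huS : u ∈ S := Submodule.le_topologicalClosure _ hu
    have h1 : S.orthogonalProjectionOnto u = ⟨u, huS⟩ :=
      Submodule.orthogonalProjectionOnto_mem_subspace_eq_self (⟨u, huS⟩ : ↥S)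
    have h2 : (⟨u, huS⟩ : ↥S) = e₂.toContinuousLinearMap ⟨u, hu⟩ := rfl
    calc W u = W₁ (S.orthogonalProjectionOnto u) := rfl
    _ = W₁ (e₂.toContinuousLinearMap ⟨u, hu⟩) := by rw [h1, h2]
    _ = Ψ.toContinuousLinearMap ⟨u, hu⟩ := ContinuousLinearMap.extend_eq _ h_dense h_ui _
    _ = ψ ⟨u, hu⟩ := rfl
  refine ⟨W, ?_, ?_⟩
  · intro x
    have := hWmem (T' x) (LinearMap.mem_range_self T' x)
    rw [hψ_app x] at this
    exact this
  · intro y hy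
    rw [← hrr] at hy
    have hySperp : y ∈ Sᗮ := by
      rw [Submodule.mem_orthogonal']
      have hKle : LinearMap.range T' ≤ LinearMap.ker (innerSL ℂ y : H →ₗ[ℂ] ℂ) := by
        intro u hu
        exact LinearMap.mem_ker.mpr ((Submodule.mem_orthogonal' _ _).mp hy u hu)
      have hcl : S ≤ LinearMap.ker (innerSL ℂ y : H →ₗ[ℂ] ℂ) :=
        Submodule.topologicalClosure_minimal _ hKle (ContinuousLinearMap.isClosed_ker _)
      intro u hu
      exact hcl hu
    have h0 : S.orthogonalProjectionOnto y = 0 :=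
      Submodule.orthogonalProjectionOnto_apply_of_mem_orthogonal hySperp
    calc W y = W₁ (S.orthogonalProjectionOnto y) := rfl
    _ = W₁ 0 := by rw [h0]
    _ = 0 := map_zero W₁

/-- Two-sided ideals of `B(H)` are `*`-closed. -/
private lemma star_mem_ideal {J : Set (H →L[ℂ] H)} (hJ : IsTwoSidedIdeal J)
    {T : H →L[ℂ] H} (hT : T ∈ J) : star T ∈ J := by
  set C : H →L[ℂ] H := CFC.sqrt (star T * T) with hCdef
  have hC0 : (0 : H →L[ℂ] H) ≤ C := CFC.sqrt_nonneg _
  have hCsa : star C = C := IsSelfAdjoint.of_nonneg hC0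
  have hC2 : C * C = star T * T := CFC.sqrt_mul_sqrt_self _ (star_mul_self_nonneg T)
  have hCadj : adjoint C = C := by rw [← star_eq_adjoint, hCsa]
  have hnorm : ∀ x, ‖C x‖ = ‖T x‖ := by
    intro x
    have h1 : (inner ℂ (C x) (C x) : ℂ) = inner ℂ (T x) (T x) := by
      calc (inner ℂ (C x) (C x) : ℂ) = inner ℂ (adjoint C (C x)) x := by
            rw [ContinuousLinearMap.adjoint_inner_left]
      _ = inner ℂ ((C * C) x) x := by rw [hCadj]; rfl
      _ = inner ℂ ((star T * T) x) x := by rw [hC2]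
      _ = inner ℂ (adjoint T (T x)) x := by rw [star_eq_adjoint]; rfl
      _ = inner ℂ (T x) (T x) := by rw [ContinuousLinearMap.adjoint_inner_left]
    have h2 : ‖C x‖ ^ 2 = ‖T x‖ ^ 2 := by
      rw [inner_self_eq_norm_sq_to_K, inner_self_eq_norm_sq_to_K] at h1
      exact_mod_cast h1
    calc ‖C x‖ = Real.sqrt (‖C x‖ ^ 2) := (Real.sqrt_sq (norm_nonneg _)).symm
    _ = Real.sqrt (‖T x‖ ^ 2) := by rw [h2]
    _ = ‖T x‖ := Real.sqrt_sq (norm_nonneg _)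
  obtain ⟨W, hW1, hW2⟩ := exists_factor_through T C hnorm
  have hCT : C = W ∘L T := by ext x; exact (hW1 x).symm
  have hCJ : C ∈ J := hCT ▸ hJ.mul_left W hT
  have hTstar : star T = C ∘L W := by
    rw [star_eq_adjoint]
    set S : Submodule ℂ H := (LinearMap.range (T : H →ₗ[ℂ] H)).topologicalClosure with hS
    haveI : CompleteSpace ↥S := (Submodule.isClosed_topologicalClosure _).completeSpace_coe
    set g : H →L[ℂ] H := adjoint T - C ∘L W with hg
    have hg0 : ∀ x, g (T x) = 0 := by
      intro x
      have h1 : adjoint T (T x) = C (C x) := by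
        have : (adjoint T ∘L T) x = ((star T * T)) x := by
          rw [star_eq_adjoint, mul_def]
        rw [← hC2] at this
        simpa using this
      simp [hg, ContinuousLinearMap.sub_apply, h1, hW1 x]
    have hgS : ∀ p ∈ S, g p = 0 := by
      have hle : LinearMap.range (T : H →ₗ[ℂ] H) ≤ LinearMap.ker (g : H →ₗ[ℂ] H) := by
        rintro p ⟨x, rfl⟩
        exact LinearMap.mem_ker.mpr (hg0 x)
      have := Submodule.topologicalClosure_minimal _ hle (ContinuousLinearMap.isClosed_ker g)
      intro p hp
      exact this hp
    have hgperp : ∀ q ∈ (LinearMap.range (T : H →ₗ[ℂ] H))ᗮ, g q = 0 := by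
      intro q hq
      have hTq : adjoint T q = 0 := by
        rw [← inner_self_eq_zero (𝕜 := ℂ)]
        calc (inner ℂ (adjoint T q) (adjoint T q) : ℂ) = inner ℂ q (T (adjoint T q)) := by
              rw [ContinuousLinearMap.adjoint_inner_left]
        _ = 0 := by
              rw [inner_eq_zero_symm]
              exact (Submodule.mem_orthogonal _ _).mp hq _ (LinearMap.mem_range_self (T : H →ₗ[ℂ] H) _)
      simp [hg, ContinuousLinearMap.sub_apply, hTq, hW2 q hq]
    ext y
    have hdecomp : y = ↑(S.orthogonalProjectionOnto y) + (y - ↑(S.orthogonalProjectionOnto y)) := by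
      abel
    have hp : (↑(S.orthogonalProjectionOnto y) : H) ∈ S := (S.orthogonalProjectionOnto y).2
    have hqS : y - ↑(S.orthogonalProjectionOnto y) ∈ Sᗮ :=
      Submodule.sub_starProjection_mem_orthogonal (K := S) y
    have hq : y - ↑(S.orthogonalProjectionOnto y) ∈ (LinearMap.range (T : H →ₗ[ℂ] H))ᗮ :=
      Submodule.orthogonal_le (Submodule.le_topologicalClosure _) hqS
    have : g y = 0 := by
      conv_lhs => rw [hdecomp]
      rw [map_add, hgS _ hp, hgperp _ hq, add_zero]
    have := sub_eq_zero.mp (by simpa [hg, ContinuousLinearMap.sub_apply] using this)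
    exact this
  rw [hTstar]
  exact hJ.mul_right W hCJ

private lemma orthoProjOnto_unique {P P' : H →L[ℂ] H} {S : Submodule ℂ H}
    (h : IsOrthoProjOnto P S) (h' : IsOrthoProjOnto P' S) : P = P' := by
  obtain ⟨⟨hP2, hPsa⟩, hPr⟩ := h
  obtain ⟨⟨hP'2, hP'sa⟩, hP'r⟩ := h'
  have key : ∀ Q : H →L[ℂ] H, Q ∘L Q = Q → ∀ y ∈ LinearMap.range (Q : H →ₗ[ℂ] H), Q y = y := by
    intro Q hQ y hy
    obtain ⟨x, rfl⟩ := hy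
    calc Q (Q x) = (Q ∘L Q) x := rfl
    _ = Q x := by rw [hQ]
  have h1 : P' * P = P := by
    rw [mul_def]; ext x
    have hx : P x ∈ LinearMap.range (P' : H →ₗ[ℂ] H) := by
      rw [hP'r, ← hPr]; exact LinearMap.mem_range_self (P : H →ₗ[ℂ] H) x
    exact key P' hP'2 (P x) hx
  have h2 : P * P' = P' := by
    rw [mul_def]; ext x
    have hx : P' x ∈ LinearMap.range (P : H →ₗ[ℂ] H) := by
      rw [hPr, ← hP'r]; exact LinearMap.mem_range_self (P' : H →ₗ[ℂ] H) x
    exact key P hP2 (P' x) hx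
  have h3 := congrArg star h1
  rw [star_mul, hPsa, hP'sa] at h3
  exact h3.symm.trans h2

private lemma mp_range_proj {A Ad : H →L[ℂ] H} (h : IsMoorePenrose A Ad) :
    IsOrthoProjOnto (A ∘L Ad) (LinearMap.range (A : H →ₗ[ℂ] H)) := by
  obtain ⟨h1, h2, h3, h4⟩ := h
  have m1 : A * (Ad * A) = A := by simpa only [← mul_def] using h1
  refine ⟨⟨?_, h3⟩, ?_⟩
  · simp only [← mul_def]
    calc (A * Ad) * (A * Ad) = (A * (Ad * A)) * Ad := by noncomm_ring
    _ = A * Ad := by rw [m1]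
  · apply le_antisymm
    · rintro y ⟨x, rfl⟩
      exact ⟨Ad x, rfl⟩
    · rintro y ⟨x, rfl⟩
      exact ⟨A x, DFunLike.congr_fun h1 x⟩

private lemma mp_ker_proj {A Ad : H →L[ℂ] H} (h : IsMoorePenrose A Ad) :
    IsOrthoProjOnto (1 - Ad ∘L A) (LinearMap.ker (A : H →ₗ[ℂ] H)) := by
  obtain ⟨h1, h2, h3, h4⟩ := h
  have m1 : A * (Ad * A) = A := by simpa only [← mul_def] using h1
  refine ⟨⟨?_, ?_⟩, ?_⟩
  · simp only [← mul_def]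
    have e1 : (Ad * A) * (Ad * A) = Ad * A := by
      calc (Ad * A) * (Ad * A) = Ad * (A * (Ad * A)) := by noncomm_ring
      _ = Ad * A := by rw [m1]
    calc (1 - Ad * A) * (1 - Ad * A) = 1 - Ad * A - Ad * A + (Ad * A) * (Ad * A) := by
          noncomm_ring
    _ = 1 - Ad * A := by rw [e1]; abel
  · exact (IsSelfAdjoint.one (R := H →L[ℂ] H)).sub h4
  · apply le_antisymm
    · rintro y ⟨x, rfl⟩
      have : A ((1 - Ad ∘L A) x) = 0 := by
        have hx : A (Ad (A x)) = A x := DFunLike.congr_fun h1 x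
        simp [ContinuousLinearMap.sub_apply, map_sub, hx]
      exact LinearMap.mem_ker.mpr this
    · intro x hx
      have hx0 : A x = 0 := hx
      exact ⟨x, by simp [ContinuousLinearMap.sub_apply, hx0]⟩


/-- If `J` is a two-sided ideal and `A, B` are closed range operators
with `A − B ∈ J`, then `A† − B† ∈ J`, `P_{R(A)} − P_{R(B)} ∈ J` and
`P_{N(A)} − P_{N(B)} ∈ J`. -/
theorem stmt_4 (J : Set (H →L[ℂ] H)) (hJ : IsTwoSidedIdeal J)
    (A B Ad Bd PA PB QA QB : H →L[ℂ] H)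
    (hAcl : IsClosed (LinearMap.range (A : H →ₗ[ℂ] H) : Set H))
    (hBcl : IsClosed (LinearMap.range (B : H →ₗ[ℂ] H) : Set H))
    (hAB : A - B ∈ J)
    (hAd : IsMoorePenrose A Ad) (hBd : IsMoorePenrose B Bd)
    (hPA : IsOrthoProjOnto PA (LinearMap.range (A : H →ₗ[ℂ] H)))
    (hPB : IsOrthoProjOnto PB (LinearMap.range (B : H →ₗ[ℂ] H)))
    (hQA : IsOrthoProjOnto QA (LinearMap.ker (A : H →ₗ[ℂ] H)))
    (hQB : IsOrthoProjOnto QB (LinearMap.ker (B : H →ₗ[ℂ] H))) :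
    Ad - Bd ∈ J ∧ PA - PB ∈ J ∧ QA - QB ∈ J := by
  have hPAeq : PA = A ∘L Ad := orthoProjOnto_unique hPA (mp_range_proj hAd)
  have hPBeq : PB = B ∘L Bd := orthoProjOnto_unique hPB (mp_range_proj hBd)
  have hQAeq : QA = 1 - Ad ∘L A := orthoProjOnto_unique hQA (mp_ker_proj hAd)
  have hQBeq : QB = 1 - Bd ∘L B := orthoProjOnto_unique hQB (mp_ker_proj hBd)
  obtain ⟨ha1, ha2, ha3, ha4⟩ := hAd
  obtain ⟨hb1, hb2, hb3, hb4⟩ := hBd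
  have ma1 : A * (Ad * A) = A := by simpa only [← mul_def] using ha1
  have ma2 : Ad * (A * Ad) = Ad := by simpa only [← mul_def] using ha2
  have mb1 : B * (Bd * B) = B := by simpa only [← mul_def] using hb1
  have mb2 : Bd * (B * Bd) = Bd := by simpa only [← mul_def] using hb2
  have sP : star (A * Ad) = A * Ad := by rw [mul_def]; exact ha3
  have sP2 : star (Ad * A) = Ad * A := by rw [mul_def]; exact ha4
  have sQ : star (B * Bd) = B * Bd := by rw [mul_def]; exact hb3
  have sQ2 : star (Bd * B) = Bd * B := by rw [mul_def]; exact hb4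
  have hml : ∀ (X : H →L[ℂ] H) {Y : H →L[ℂ] H}, Y ∈ J → X * Y ∈ J := by
    intro X Y hY; rw [mul_def]; exact hJ.mul_left X hY
  have hmr : ∀ (X : H →L[ℂ] H) {Y : H →L[ℂ] H}, Y ∈ J → Y * X ∈ J := by
    intro X Y hY; rw [mul_def]; exact hJ.mul_right X hY
  have hsub : ∀ {X Y : H →L[ℂ] H}, X ∈ J → Y ∈ J → X - Y ∈ J := by
    intro X Y hX hY; rw [sub_eq_add_neg]; exact hJ.add_mem hX (hJ.neg_mem hY)
  have hΔ : A - B ∈ J := hAB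
  have hΔ' : B - A ∈ J := by have := hJ.neg_mem hAB; rwa [neg_sub] at this
  -- P_{R(A)} - P_{R(B)} ∈ J
  have j1 : (1 - B * Bd) * (A * Ad) ∈ J := by
    have e : (1 - B * Bd) * (A * Ad)
        = ((1 - B * Bd) * (A - B)) * Ad + (B - B * (Bd * B)) * Ad := by noncomm_ring
    rw [mb1, sub_self, zero_mul, add_zero] at e
    rw [e]
    exact hmr Ad (hml (1 - B * Bd) hΔ)
  have j1s : (A * Ad) * (1 - B * Bd) ∈ J := by
    have := star_mem_ideal hJ j1
    rwa [star_mul, sP, star_sub, star_one, sQ] at this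
  have j2 : (1 - A * Ad) * (B * Bd) ∈ J := by
    have e : (1 - A * Ad) * (B * Bd)
        = ((1 - A * Ad) * (B - A)) * Bd + (A - A * (Ad * A)) * Bd := by noncomm_ring
    rw [ma1, sub_self, zero_mul, add_zero] at e
    rw [e]
    exact hmr Bd (hml (1 - A * Ad) hΔ')
  have goal2 : A * Ad - B * Bd ∈ J := by
    have e : A * Ad - B * Bd = (A * Ad) * (1 - B * Bd) - (1 - A * Ad) * (B * Bd) := by
      noncomm_ring
    rw [e]
    exact hsub j1s j2
  -- Ad * A - Bd * B ∈ J
  have j3 : (Ad * A) * (1 - Bd * B) ∈ J := by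
    have e : (Ad * A) * (1 - Bd * B)
        = (Ad * (A - B)) * (1 - Bd * B) + Ad * (B - B * (Bd * B)) := by noncomm_ring
    rw [mb1, sub_self, mul_zero, add_zero] at e
    rw [e]
    exact hmr (1 - Bd * B) (hml Ad hΔ)
  have j4 : (Bd * B) * (1 - Ad * A) ∈ J := by
    have e : (Bd * B) * (1 - Ad * A)
        = (Bd * (B - A)) * (1 - Ad * A) + Bd * (A - A * (Ad * A)) := by noncomm_ring
    rw [ma1, sub_self, mul_zero, add_zero] at e
    rw [e]
    exact hmr (1 - Ad * A) (hml Bd hΔ')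
  have j4s : (1 - Ad * A) * (Bd * B) ∈ J := by
    have := star_mem_ideal hJ j4
    rwa [star_mul, sQ2, star_sub, star_one, sP2] at this
  have goal3 : Ad * A - Bd * B ∈ J := by
    have e : Ad * A - Bd * B = (Ad * A) * (1 - Bd * B) - (1 - Ad * A) * (Bd * B) := by
      noncomm_ring
    rw [e]
    exact hsub j3 j4s
  -- Ad - Bd ∈ J
  have goal1 : Ad - Bd ∈ J := by
    have e : Ad - Bd
        = Ad * ((A * Ad) - (B * Bd)) + (Ad * (B - A)) * Bd + ((Ad * A) - (Bd * B)) * Bd := by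
      calc Ad - Bd = Ad * (A * Ad) - Bd * (B * Bd) := by rw [ma2, mb2]
      _ = Ad * ((A * Ad) - (B * Bd)) + (Ad * (B - A)) * Bd + ((Ad * A) - (Bd * B)) * Bd := by
          noncomm_ring
    rw [e]
    exact hJ.add_mem (hJ.add_mem (hml Ad goal2) (hmr Bd (hml Ad hΔ'))) (hmr Bd goal3)
  refine ⟨goal1, ?_, ?_⟩
  · rw [hPAeq, hPBeq]
    simpa only [← mul_def] using goal2
  · rw [hQAeq, hQBeq]
    have e : (1 - Ad ∘L A) - (1 - Bd ∘L B) = -(Ad * A - Bd * B) := by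
      simp only [← mul_def]; noncomm_ring
    rw [e]
    exact hJ.neg_mem goal3

end
end

section
/- Let J be a proper two-sided ideal of B(H) and A a closed range operator with polar decomposition A = V_A|A|. If |A*| − P_{R(A)} ∈ J, then there exists an invertible operator G with G − I ∈ J such that GA = V_A. -/
open ContinuousLinearMap
open scoped ENNReal

set_option maxHeartbeats 1600000
set_option synthInstance.maxHeartbeats 800000

noncomputable section

variable {H : Type*} [NormedAddCommGroup H] [InnerProductSpace ℂ H] [CompleteSpace H]

/-- Let `J` be a proper two-sided ideal, `A` a closed range
operator with polar decomposition `A = V_A|A|`. If `|A*| − P_{R(A)} ∈ J`, then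
there exists an invertible `G` with `G − I ∈ J` and `GA = V_A`. -/
theorem stmt_12 (J : Set (H →L[ℂ] H)) (hJ : IsProperIdeal J)
    (A VA CA CAs PRA : H →L[ℂ] H)
    (hAcl : IsClosed (LinearMap.range (A : H →ₗ[ℂ] H) : Set H))
    (hApd : IsPolarDecomp A VA CA)
    (hCAs : CAs.IsPositive) (hCAs2 : CAs ∘L CAs = A ∘L adjoint A)
    (hPRA : IsOrthoProjOnto PRA (LinearMap.range (A : H →ₗ[ℂ] H)))
    (hyp : CAs - PRA ∈ J) :
    ∃ G : (H →L[ℂ] H)ˣ, (G : H →L[ℂ] H) - 1 ∈ J ∧ (G : H →L[ℂ] H) ∘L A = VA := by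
  obtain ⟨hAVC, hCpos, hC2, hPI, hkerV⟩ := hApd
  obtain ⟨⟨hPP, hPsa⟩, hPrange⟩ := hPRA
  have hCsa : IsSelfAdjoint CA := hCpos.isSelfAdjoint
  have hDsa : IsSelfAdjoint CAs := hCAs.isSelfAdjoint
  -- inner ℂ product identity ⟪Cu, Cu⟫ = ⟪Au, Au⟫
  have hCAinner : ∀ u : H, (inner ℂ (CA u) (CA u) : ℂ) = inner ℂ (A u) (A u) := by
    intro u
    calc (inner ℂ (CA u) (CA u) : ℂ) = inner ℂ ((adjoint CA) u) (CA u) := by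
          rw [hCsa.adjoint_eq]
      _ = inner ℂ u (CA (CA u)) := adjoint_inner_left CA (CA u) u
      _ = inner ℂ u ((adjoint A) (A u)) := by
          have h := DFunLike.congr_fun hC2 u
          simp only [ContinuousLinearMap.comp_apply] at h
          rw [h]
      _ = inner ℂ (A u) (A u) := adjoint_inner_right A u (A u)
  have hker_AC : ∀ u : H, A u = 0 → CA u = 0 := by
    intro u hu
    have h := hCAinner u
    rw [hu, inner_zero_left] at h
    exact inner_self_eq_zero.mp h
  have hker_CA : ∀ u : H, CA u = 0 → A u = 0 := by
    intro u hu
    have h := (hCAinner u).symm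
    rw [hu, inner_zero_left] at h
    exact inner_self_eq_zero.mp h
  have hker_VA : ∀ u : H, VA u = 0 → A u = 0 := fun u h =>
    LinearMap.mem_ker.mp (hkerV ▸ LinearMap.mem_ker.mpr h)
  have hker_AV : ∀ u : H, A u = 0 → VA u = 0 := fun u h =>
    LinearMap.mem_ker.mp (hkerV.symm ▸ LinearMap.mem_ker.mpr h)
  have hker_VC : ∀ u : H, VA u = 0 → CA u = 0 := fun u h => hker_AC u (hker_VA u h)
  have hPIpt : ∀ x : H, VA ((adjoint VA) (VA x)) = VA x := by
    intro x
    have h := DFunLike.congr_fun hPI x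
    simpa only [ContinuousLinearMap.comp_apply] using h
  have hCQ : ∀ x : H, CA ((adjoint VA) (VA x)) = CA x := by
    intro x
    have h0 : VA ((adjoint VA) (VA x) - x) = 0 := by
      rw [map_sub, hPIpt x, sub_self]
    have h1 := hker_VC _ h0
    rw [map_sub] at h1
    exact sub_eq_zero.mp h1
  have hCQ' : CA ∘L (adjoint VA ∘L VA) = CA := by
    ext x
    simpa only [ContinuousLinearMap.comp_apply] using hCQ x
  have hQC : ∀ x : H, (adjoint VA) (VA (CA x)) = CA x := by
    have h2 := congrArg ContinuousLinearMap.adjoint hCQ'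
    rw [adjoint_comp, adjoint_comp, adjoint_adjoint, hCsa.adjoint_eq] at h2
    intro x
    have h3 := DFunLike.congr_fun h2 x
    simpa only [ContinuousLinearMap.comp_apply] using h3
  have hadjA : adjoint A = CA ∘L adjoint VA := by
    rw [hAVC, adjoint_comp, hCsa.adjoint_eq]
  have hE2 : (VA ∘L (CA ∘L adjoint VA)) ∘L (VA ∘L (CA ∘L adjoint VA)) = A ∘L adjoint A := by
    ext x
    simp only [ContinuousLinearMap.comp_apply]
    rw [hQC (adjoint VA x), hadjA, hAVC]
    simp only [ContinuousLinearMap.comp_apply]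
  have hDE : CAs = VA ∘L (CA ∘L adjoint VA) := by
    have hDnn : (0 : H →L[ℂ] H) ≤ CAs := (nonneg_iff_isPositive _).mpr hCAs
    have hEnn : (0 : H →L[ℂ] H) ≤ VA ∘L (CA ∘L adjoint VA) :=
      (nonneg_iff_isPositive _).mpr (hCpos.conj_adjoint VA)
    have hsq : CAs ^ 2 = (VA ∘L (CA ∘L adjoint VA)) ^ 2 := by
      rw [sq, sq, ContinuousLinearMap.mul_def, ContinuousLinearMap.mul_def, hCAs2, hE2]
    calc CAs = CFC.sqrt (CAs ^ 2) := (CFC.sqrt_sq CAs hDnn).symm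
      _ = CFC.sqrt ((VA ∘L (CA ∘L adjoint VA)) ^ 2) := by rw [hsq]
      _ = VA ∘L (CA ∘L adjoint VA) := CFC.sqrt_sq _ hEnn
  have hDV : ∀ x : H, CAs (VA x) = A x := by
    intro x
    rw [hDE]
    simp only [ContinuousLinearMap.comp_apply]
    rw [hCQ x, hAVC]
    simp only [ContinuousLinearMap.comp_apply]
  -- range V ⊆ range A
  have hVmem : ∀ x : H, VA x ∈ LinearMap.range (A : H →ₗ[ℂ] H) := by
    intro x
    have h1 : (adjoint VA) (VA x) ∈ (LinearMap.ker (CA : H →ₗ[ℂ] H))ᗮ := by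
      rw [Submodule.mem_orthogonal]
      intro u hu
      have hu' : VA u = 0 := hker_AV u (hker_CA u (LinearMap.mem_ker.mp hu))
      rw [adjoint_inner_right, hu', inner_zero_left]
    have h2 : (LinearMap.ker (CA : H →ₗ[ℂ] H))ᗮ ≤ (LinearMap.range (CA : H →ₗ[ℂ] H)).topologicalClosure := by
      rw [← Submodule.orthogonal_orthogonal_eq_closure]
      apply Submodule.orthogonal_le
      intro u hu
      rw [Submodule.mem_orthogonal] at hu
      rw [LinearMap.mem_ker]
      have h3 : (inner ℂ (CA u) (CA u) : ℂ) = 0 := by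
        calc (inner ℂ (CA u) (CA u) : ℂ) = inner ℂ ((adjoint CA) u) (CA u) := by
              rw [hCsa.adjoint_eq]
          _ = inner ℂ u (CA (CA u)) := adjoint_inner_left CA (CA u) u
          _ = 0 := by
              rw [← inner_conj_symm]
              rw [hu (CA (CA u)) ⟨CA u, rfl⟩]
              simp
      exact inner_self_eq_zero.mp h3
    have h4 : (adjoint VA) (VA x) ∈ closure ((LinearMap.range (CA : H →ₗ[ℂ] H) : Submodule ℂ H) : Set H) :=
      h2 h1
    have h5 : VA ((adjoint VA) (VA x)) ∈
        closure (VA '' ((LinearMap.range (CA : H →ₗ[ℂ] H) : Submodule ℂ H) : Set H)) :=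
      (image_closure_subset_closure_image VA.continuous) ⟨_, h4, rfl⟩
    have h6 : VA '' ((LinearMap.range (CA : H →ₗ[ℂ] H) : Submodule ℂ H) : Set H) ⊆
        ((LinearMap.range (A : H →ₗ[ℂ] H) : Submodule ℂ H) : Set H) := by
      rintro _ ⟨_, ⟨y, rfl⟩, rfl⟩
      refine ⟨y, ?_⟩
      rw [hAVC]; rfl
    have h7 : VA ((adjoint VA) (VA x)) ∈ ((LinearMap.range (A : H →ₗ[ℂ] H) : Submodule ℂ H) : Set H) := by
      have := closure_mono h6 h5
      rwa [hAcl.closure_eq] at this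
    rwa [hPIpt x] at h7
  have hPfix : ∀ y : H, y ∈ LinearMap.range (A : H →ₗ[ℂ] H) → PRA y = y := by
    intro y hy
    rw [← hPrange] at hy
    obtain ⟨z, rfl⟩ := hy
    have h := DFunLike.congr_fun hPP z
    change PRA (PRA z) = PRA z
    simpa only [ContinuousLinearMap.comp_apply] using h
  have hPV : ∀ x : H, PRA (VA x) = VA x := fun x => hPfix _ (hVmem x)
  have hPD : ∀ x : H, PRA (CAs x) = CAs x := by
    intro x
    rw [hDE]
    simp only [ContinuousLinearMap.comp_apply]
    exact hPV _
  have hPA : ∀ x : H, PRA (A x) = A x := fun x => hPfix _ ⟨x, rfl⟩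
  have hP1P : ∀ x : H, PRA (x - PRA x) = 0 := by
    intro x
    have h := DFunLike.congr_fun hPP x
    simp only [ContinuousLinearMap.comp_apply] at h
    rw [map_sub, h, sub_self]
  have hDperp : ∀ z : H, PRA z = 0 → CAs z = 0 := by
    intro z hz
    have hA'z : adjoint A z = 0 := by
      have h : (inner ℂ (adjoint A z) (adjoint A z) : ℂ) = 0 := by
        rw [adjoint_inner_left, ← hPA (adjoint A z), ← hPsa.adjoint_eq,
          adjoint_inner_right, hz, inner_zero_left]
      exact inner_self_eq_zero.mp h
    have hDz2 : CAs (CAs z) = 0 := by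
      have h := DFunLike.congr_fun hCAs2 z
      simp only [ContinuousLinearMap.comp_apply] at h
      rw [h, hA'z, map_zero]
    have h : (inner ℂ (CAs z) (CAs z) : ℂ) = 0 := by
      rw [← hDsa.adjoint_eq, adjoint_inner_left, hDsa.adjoint_eq, hDz2, inner_zero_right]
    exact inner_self_eq_zero.mp h
  -- the operator T
  set T : H →L[ℂ] H := CAs + (1 - PRA) with hTdef
  have hTapp : ∀ x : H, T x = CAs x + (x - PRA x) := by
    intro x
    simp [hTdef, ContinuousLinearMap.add_apply, ContinuousLinearMap.sub_apply,
      ContinuousLinearMap.one_apply]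
  have hinj : ∀ x : H, T x = 0 → x = 0 := by
    intro x hx
    have h1 : CAs x = 0 := by
      have h2 : PRA (T x) = CAs x := by
        rw [hTapp, map_add, hPD, hP1P, add_zero]
      rw [hx, map_zero] at h2
      exact h2.symm
    have h3 : x - PRA x = 0 := by
      have h := hTapp x
      rw [hx, h1, zero_add] at h
      exact h.symm
    have h4 : adjoint A x = 0 := by
      have h : (inner ℂ (adjoint A x) (adjoint A x) : ℂ) = 0 := by
        rw [adjoint_inner_left]
        have h5 := DFunLike.congr_fun hCAs2 x
        simp only [ContinuousLinearMap.comp_apply] at h5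
        rw [← h5, h1, map_zero, inner_zero_right]
      exact inner_self_eq_zero.mp h
    have h6 : x ∈ LinearMap.range (A : H →ₗ[ℂ] H) := by
      rw [← hPrange]
      exact ⟨x, (sub_eq_zero.mp h3).symm⟩
    obtain ⟨w, hw⟩ := h6
    change A w = x at hw
    have h7 : (inner ℂ x x : ℂ) = 0 := by
      calc (inner ℂ x x : ℂ) = inner ℂ x (A w) := by rw [hw]
        _ = inner ℂ (adjoint A x) w := (adjoint_inner_left A w x).symm
        _ = 0 := by rw [h4, inner_zero_left]
    exact inner_self_eq_zero.mp h7
  have hsurjT : ∀ y : H, ∃ x, T x = y := by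
    intro y
    have h1 : PRA y ∈ LinearMap.range (A : H →ₗ[ℂ] H) := by
      rw [← hPrange]; exact ⟨y, rfl⟩
    obtain ⟨w, hw⟩ := h1
    change A w = PRA y at hw
    refine ⟨VA w + (y - PRA y), ?_⟩
    have hDx : CAs (VA w + (y - PRA y)) = PRA y := by
      rw [map_add, hDV w, hw, hDperp _ (hP1P y), add_zero]
    have hPx : PRA (VA w + (y - PRA y)) = VA w := by
      rw [map_add, hPV, hP1P, add_zero]
    rw [hTapp, hDx, hPx]
    abel
  have hker : LinearMap.ker (T : H →ₗ[ℂ] H) = ⊥ := LinearMap.ker_eq_bot'.mpr hinj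
  have hrange : LinearMap.range (T : H →ₗ[ℂ] H) = ⊤ := LinearMap.range_eq_top.mpr hsurjT
  let e := ContinuousLinearEquiv.ofBijective T hker hrange
  have heT : ∀ x : H, e x = T x := fun x =>
    congrFun (ContinuousLinearEquiv.coeFn_ofBijective T hker hrange) x
  set S : H →L[ℂ] H := (e.symm : H →L[ℂ] H) with hSdef
  have hST : ∀ x : H, S (T x) = x := by
    intro x
    have h := e.symm_apply_apply x
    rwa [heT x] at h
  have hTS : ∀ x : H, T (S x) = x := by
    intro x
    have h := e.apply_symm_apply x
    rwa [heT (e.symm x)] at h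
  refine ⟨⟨S, T, ?_, ?_⟩, ?_, ?_⟩
  · ext x
    exact hST x
  · ext x
    exact hTS x
  · -- S - 1 ∈ J
    have hJ' := hJ.1
    have hmem : PRA - CAs ∈ J := by
      have h := hJ'.neg_mem hyp
      simpa [neg_sub] using h
    have h2 : S ∘L (PRA - CAs) ∈ J := hJ'.mul_left S hmem
    have h3 : S - 1 = S ∘L (PRA - CAs) := by
      ext x
      simp only [ContinuousLinearMap.comp_apply, ContinuousLinearMap.sub_apply,
        ContinuousLinearMap.one_apply]
      have h4 : PRA x - CAs x = x - T x := by
        rw [hTapp]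
        abel
      rw [h4, map_sub, hST x]
    show S - 1 ∈ J
    rw [h3]
    exact h2
  · -- S ∘L A = VA
    show S ∘L A = VA
    ext x
    simp only [ContinuousLinearMap.comp_apply]
    have h5 : T (VA x) = A x := by
      rw [hTapp, hDV x, hPV x]
      abel
    rw [← h5, hST]


end
end
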